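/- If ρ is a 4×4 density matrix on ℂ²⊗ℂ² of zero-discord form ρ = Σ_{k=1,2} p_k |e_k⟩⟨e_k| ⊗ σ_k with {|e_k⟩} an orthonormal basis of ℂ² and σ_k density matrices, then every 2×2 principal minor of ρ is invariant under partial transposition on the second system: PM_{nm}(ρ) = PM_{nm}(ρ^{τ_B}) for all 1 ≤ n < m ≤ 4. -/

import Mathlib

open Matrix Kronecker ComplexOrder

/-- Partial transpose on the second tensor factor. -/
def ptB {m n : ℕ} (ρ : Matrix (Fin m × Fin n) (Fin m × Fin n) ℂ) :
    Matrix (Fin m × Fin n) (Fin m × Fin n) ℂ :=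
  fun p q => ρ (p.1, q.2) (q.1, p.2)

/-- The 2×2 principal minor of a matrix on the rows/columns indexed by `a` and `b`. -/
def PM {ι : Type*} (A : Matrix ι ι ℂ) (a b : ι) : ℂ :=
  A a a * A b b - A a b * A b a

/-- Outer product |v⟩⟨v|. -/
noncomputable def outer {n : Type*} (v : n → ℂ) : Matrix n n ℂ :=
  Matrix.vecMulVec v (fun j => star (v j))

theorem stmt2 (ρ : Matrix (Fin 2 × Fin 2) (Fin 2 × Fin 2) ℂ)
    (hρ : ρ.PosSemidef) (htr : ρ.trace = 1)
    (p : Fin 2 → ℝ) (e : Fin 2 → (Fin 2 → ℂ)) (σ : Fin 2 → Matrix (Fin 2) (Fin 2) ℂ)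
    (hp : ∀ k, 0 ≤ p k) (hpsum : ∑ k, p k = 1)
    (horth : ∀ k l, ∑ j, star (e k j) * e l j = if k = l then 1 else 0)
    (hσpsd : ∀ k, (σ k).PosSemidef) (hσtr : ∀ k, (σ k).trace = 1)
    (hdecomp : ρ = ∑ k, (p k : ℂ) • (outer (e k) ⊗ₖ σ k)) :
    ∀ a b : Fin 2 × Fin 2, PM ρ a b = PM (ptB ρ) a b := by
  -- completeness relation from orthonormality
  have hcomp : ∀ i j : Fin 2, e 0 i * star (e 0 j) + e 1 i * star (e 1 j)
      = if i = j then 1 else 0 := by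
    set U : Matrix (Fin 2) (Fin 2) ℂ := fun k j => star (e k j) with hU
    have hUU : U * Uᴴ = 1 := by
      ext k l
      have h := horth k l
      simp only [Fin.sum_univ_two] at h
      simp only [Matrix.mul_apply, Matrix.conjTranspose_apply]
      simp only [Matrix.mul_apply, Matrix.conjTranspose_apply, Matrix.one_apply, hU, star_star,
        Fin.sum_univ_two]
      exact h
    have hUU' : Uᴴ * U = 1 := mul_eq_one_comm.mp hUU
    intro i j
    have := congrFun (congrFun hUU' i) j
    simp only [Matrix.mul_apply, Matrix.conjTranspose_apply] at this
    simp only [Matrix.mul_apply, Matrix.conjTranspose_apply, Matrix.one_apply, hU, star_star,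
      Fin.sum_univ_two] at this
    linear_combination this
  subst hdecomp
  rintro ⟨a1, a2⟩ ⟨b1, b2⟩
  have H1 := hcomp a1 b1
  have H2 := hcomp b1 a1
  simp only [PM, ptB, Matrix.sum_apply, Matrix.smul_apply, Matrix.kroneckerMap_apply,
    outer, Matrix.vecMulVec_apply, Fin.sum_univ_two, smul_eq_mul]
  by_cases h : a1 = b1
  · subst h; ring
  · rw [if_neg h] at H1
    rw [if_neg (Ne.symm h)] at H2
    linear_combination (↑(p 0) * ↑(p 1) * (σ 0 a2 b2 * σ 1 b2 a2 - σ 1 a2 b2 * σ 0 b2 a2)) *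
      ((e 0 b1 * star (e 0 a1)) * H1 - (e 0 a1 * star (e 0 b1)) * H2)
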